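/- Under the higher order tuner for time-varying regression with μ = 2γ/β, for all T ≥ 0: ∫₀^T e_y(t)² dt ≤ V(0) = (1/γ)‖ϑ(0) - θ*‖² + (1/γ)‖θ(0) - ϑ(0)‖². That is, the continuous-time regret ∫₀^T ‖e_y‖² is bounded by a constant independent of T. -/

import Mathlib

local notation "⟪" x ", " y "⟫" => @inner ℝ _ _ x y

lemma normsq_hasDerivAt {d : ℕ} {f : ℝ → EuclideanSpace ℝ (Fin d)}
    {f' : EuclideanSpace ℝ (Fin d)} {t : ℝ} (hf : HasDerivAt f f' t) :
    HasDerivAt (fun s => ‖f s‖ ^ 2) (2 * ⟪f t, f'⟫) t := by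
  have h := hf.inner ℝ hf
  have : (fun s => ‖f s‖ ^ 2) = fun s => ⟪f s, f s⟫ := by
    funext s; rw [real_inner_self_eq_norm_sq]
  rw [this]
  exact h.congr_deriv (by rw [real_inner_comm]; ring)

theorem stmt_10 {d : ℕ} (β γ : ℝ) (hβ : 0 < β) (hγ : 0 < γ)
    (φ : ℝ → EuclideanSpace ℝ (Fin d)) (hφ : Continuous φ)
    (θstar : EuclideanSpace ℝ (Fin d))
    (θ ϑ : ℝ → EuclideanSpace ℝ (Fin d))
    (Nt : ℝ → ℝ) (hNt : Nt = fun t => 1 + (2 * γ / β) * ‖φ t‖ ^ 2)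
    (hϑ : ∀ t : ℝ, HasDerivAt ϑ ((-γ * ⟪θ t - θstar, φ t⟫) • φ t) t)
    (hθ : ∀ t : ℝ, HasDerivAt θ ((-(β * Nt t)) • (θ t - ϑ t)) t) :
    ∀ T : ℝ, 0 ≤ T →
      ∫ t in (0 : ℝ)..T, ⟪θ t - θstar, φ t⟫ ^ 2
        ≤ (1 / γ) * ‖ϑ 0 - θstar‖ ^ 2 + (1 / γ) * ‖θ 0 - ϑ 0‖ ^ 2 := by
  intro T hT
  have hθc : Continuous θ := continuous_iff_continuousAt.2 fun t => (hθ t).continuousAt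
  have hϑc : Continuous ϑ := continuous_iff_continuousAt.2 fun t => (hϑ t).continuousAt
  set e : ℝ → ℝ := fun t => ⟪θ t - θstar, φ t⟫ with he
  have hec : Continuous e := ((hθc.sub continuous_const).inner hφ)
  set V : ℝ → ℝ := fun t => (1 / γ) * ‖ϑ t - θstar‖ ^ 2 + (1 / γ) * ‖θ t - ϑ t‖ ^ 2
    with hVdef
  set V' : ℝ → ℝ := fun t =>
      (1 / γ) * (2 * ⟪ϑ t - θstar, (-γ * e t) • φ t⟫)
      + (1 / γ) * (2 * ⟪θ t - ϑ t, (-(β * Nt t)) • (θ t - ϑ t) - (-γ * e t) • φ t⟫)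
    with hV'def
  have hVd : ∀ t, HasDerivAt V (V' t) t := by
    intro t
    have h1 : HasDerivAt (fun s => ‖ϑ s - θstar‖ ^ 2)
        (2 * ⟪ϑ t - θstar, (-γ * e t) • φ t⟫) t :=
      normsq_hasDerivAt ((hϑ t).sub_const θstar)
    have h2 : HasDerivAt (fun s => ‖θ s - ϑ s‖ ^ 2)
        (2 * ⟪θ t - ϑ t, (-(β * Nt t)) • (θ t - ϑ t) - (-γ * e t) • φ t⟫) t :=
      normsq_hasDerivAt ((hθ t).sub (hϑ t))
    exact (h1.const_mul (1 / γ)).add (h2.const_mul (1 / γ))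
  have hV'c : Continuous V' := by
    have hNc : Continuous Nt := by
      rw [hNt]
      exact continuous_const.add (continuous_const.mul ((hφ.norm).pow 2))
    apply Continuous.add
    · exact continuous_const.mul (continuous_const.mul
        ((hϑc.sub continuous_const).inner (((continuous_const.mul hec)).smul hφ)))
    · exact continuous_const.mul (continuous_const.mul
        ((hθc.sub hϑc).inner
          ((((continuous_const.mul hNc).neg).smul (hθc.sub hϑc)).sub
            ((continuous_const.mul hec).smul hφ))))
  have hbound : ∀ t, e t ^ 2 ≤ -V' t := by
    intro t
    set a : ℝ := ⟪θ t - ϑ t, φ t⟫ with ha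
    have hCS : a ^ 2 ≤ ‖θ t - ϑ t‖ ^ 2 * ‖φ t‖ ^ 2 := by
      have h := abs_real_inner_le_norm (θ t - ϑ t) (φ t)
      nlinarith [abs_nonneg a, sq_abs a, norm_nonneg (θ t - ϑ t), norm_nonneg (φ t)]
    have hsplit : ⟪ϑ t - θstar, φ t⟫ = e t - a := by
      have hx : ϑ t - θstar = (θ t - θstar) - (θ t - ϑ t) := by abel
      rw [hx, inner_sub_left]
    have hV't : V' t = (1 / γ) * (2 * ((-γ * e t) * (e t - a)))
        + (1 / γ) * (2 * ((-(β * Nt t)) * ‖θ t - ϑ t‖ ^ 2 - (-γ * e t) * a)) := by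
      have h1 : ⟪ϑ t - θstar, (-γ * e t) • φ t⟫ = (-γ * e t) * (e t - a) := by
        rw [real_inner_smul_right, hsplit]
      have h2 : ⟪θ t - ϑ t, (-(β * Nt t)) • (θ t - ϑ t) - (-γ * e t) • φ t⟫
          = (-(β * Nt t)) * ‖θ t - ϑ t‖ ^ 2 - (-γ * e t) * a := by
        rw [inner_sub_right, real_inner_smul_right, real_inner_smul_right,
          real_inner_self_eq_norm_sq]
      simp only [hV'def, h1, h2]
    rw [hV't, hNt]
    have h1 : 0 ≤ ‖θ t - ϑ t‖ ^ 2 := sq_nonneg _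
    have h2 : 0 ≤ ‖φ t‖ ^ 2 := sq_nonneg _
    have hβγ : 0 < β / γ := div_pos hβ hγ
    have hγ' : γ ≠ 0 := ne_of_gt hγ
    have hβ' : β ≠ 0 := ne_of_gt hβ
    have hexp : -((1 / γ) * (2 * ((-γ * e t) * (e t - a)))
        + (1 / γ) * (2 * ((-(β * ((fun s => 1 + 2 * γ / β * ‖φ s‖ ^ 2) t)))
          * ‖θ t - ϑ t‖ ^ 2 - (-γ * e t) * a)))
        = 2 * e t ^ 2 - 4 * e t * a
          + (2 * (β / γ) + 4 * ‖φ t‖ ^ 2) * ‖θ t - ϑ t‖ ^ 2 := by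
      field_simp
      ring
    rw [hexp]
    nlinarith [sq_nonneg (e t - 2 * a), mul_nonneg (le_of_lt hβγ) h1,
      mul_nonneg h2 h1]
  have hint1 : IntervalIntegrable V' MeasureTheory.volume 0 T :=
    hV'c.intervalIntegrable 0 T
  have hint2 : IntervalIntegrable (fun t => e t ^ 2) MeasureTheory.volume 0 T :=
    (hec.pow 2).intervalIntegrable 0 T
  have hFTC : ∫ t in (0:ℝ)..T, V' t = V T - V 0 :=
    intervalIntegral.integral_eq_sub_of_hasDerivAt (fun x _ => hVd x) hint1
  have hmono : ∫ t in (0:ℝ)..T, e t ^ 2 ≤ ∫ t in (0:ℝ)..T, -V' t :=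
    intervalIntegral.integral_mono_on hT hint2 hint1.neg (fun x _ => hbound x)
  have hneg : ∫ t in (0:ℝ)..T, -V' t = V 0 - V T := by
    rw [intervalIntegral.integral_neg, hFTC]; ring
  have hVT : 0 ≤ V T := by
    rw [hVdef]
    positivity
  have hV0 : (1 / γ) * ‖ϑ 0 - θstar‖ ^ 2 + (1 / γ) * ‖θ 0 - ϑ 0‖ ^ 2 = V 0 := rfl
  rw [hV0]
  show ∫ t in (0:ℝ)..T, e t ^ 2 ≤ V 0
  linarith
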